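/- Let p and q be powers of 2 with q ≤ p^{2m}, let n = (p^{2m}−1)/(p−1), and let C ⊆ F_p^n be an additive code that is completely regular with covering radius 3 and intersection array {p^{2m}−1, p^{2m}−q, 1; 1, q, p^{2m}−1}. Then for every k that is a power of 2 with 1 ≤ k ≤ p^{2m}/q − 1, there exists an ADDITIVE code B_k ⊆ F_p^n (a subgroup of (F_p^n, +)) that is a union of k cosets of C and is completely regular with covering radius 3 and intersection array {p^{2m}−1, p^{2m}−kq, 1; 1, kq, p^{2m}−1}. -/

import Mathlib

open Finset

/-- Hamming distance from a word to a code. -/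
noncomputable def distToCode {F ι : Type*} [Fintype ι] [DecidableEq F]
    (C : Set (ι → F)) (x : ι → F) : ℕ :=
  sInf {d | ∃ c ∈ C, hammingDist x c = d}

/-- A code is completely regular with covering radius `ρ` and intersection array
`{b 0, …, b (ρ-1); c 1, …, c ρ}`. -/
def IsCompletelyRegular {F ι : Type*} [Fintype ι] [DecidableEq F]
    (C : Set (ι → F)) (ρ : ℕ) (b c : ℕ → ℕ) : Prop :=
  (∀ x, distToCode C x ≤ ρ) ∧ (∃ x, distToCode C x = ρ) ∧
    ∀ i ≤ ρ, ∀ x, distToCode C x = i →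
      (i < ρ → {y | hammingDist x y = 1 ∧ distToCode C y = i + 1}.ncard = b i) ∧
      (1 ≤ i → {y | hammingDist x y = 1 ∧ distToCode C y = i - 1}.ncard = c i)

namespace Stmt18

set_option linter.unusedSectionVars false

variable {n : ℕ} {F : Type} [Field F] [Fintype F] [DecidableEq F]

lemma distToCode_le (C : Set (Fin n → F)) {c : Fin n → F} (hc : c ∈ C) (x : Fin n → F) :
    distToCode C x ≤ hammingDist x c :=
  Nat.sInf_le ⟨c, hc, rfl⟩

lemma distToCode_spec (C : Set (Fin n → F)) (hC : C.Nonempty) (x : Fin n → F) :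
    ∃ c ∈ C, hammingDist x c = distToCode C x := by
  obtain ⟨c, hc⟩ := hC
  exact Nat.sInf_mem (⟨hammingDist x c, c, hc, rfl⟩ : {d | ∃ c ∈ C, hammingDist x c = d}.Nonempty)

lemma distToCode_eq_zero {C : Set (Fin n → F)} (hC : C.Nonempty) (x : Fin n → F) :
    distToCode C x = 0 ↔ x ∈ C := by
  constructor
  · intro h
    obtain ⟨c, hc, hdc⟩ := distToCode_spec C hC x
    rw [h] at hdc
    rwa [(hammingDist_eq_zero.1 hdc)]
  · intro h
    exact Nat.le_zero.1 (by simpa using distToCode_le C h x)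

lemma distToCode_mono {C B : Set (Fin n → F)} (hCB : C ⊆ B) (hC : C.Nonempty) (x : Fin n → F) :
    distToCode B x ≤ distToCode C x := by
  obtain ⟨c, hc, hdc⟩ := distToCode_spec C hC x
  rw [← hdc]
  exact distToCode_le B (hCB hc) x

lemma hammingDist_def (x y : Fin n → F) :
    hammingDist x y = (univ.filter fun i => x i ≠ y i).card := rfl

lemma hammingDist_add_right (x y t : Fin n → F) :
    hammingDist (x + t) (y + t) = hammingDist x y := by
  rw [hammingDist_eq_hammingNorm, hammingDist_eq_hammingNorm]
  congr 1
  abel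

lemma distToCode_add_mem (C : AddSubgroup (Fin n → F)) (x : Fin n → F) {c : Fin n → F}
    (hc : c ∈ C) :
    distToCode (C : Set (Fin n → F)) (x + c) = distToCode (C : Set (Fin n → F)) x := by
  have hCne : (C : Set (Fin n → F)).Nonempty := ⟨0, SetLike.mem_coe.2 (zero_mem C)⟩
  have key : ∀ (z c' : Fin n → F), c' ∈ C →
      distToCode (C : Set (Fin n → F)) (z + c') ≤ distToCode (C : Set (Fin n → F)) z := by
    intro z c' hc'
    obtain ⟨c₀, hc₀, hd⟩ := distToCode_spec _ hCne z
    calc distToCode (C : Set (Fin n → F)) (z + c')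
        ≤ hammingDist (z + c') (c₀ + c') :=
          distToCode_le _ (SetLike.mem_coe.2 (add_mem (SetLike.mem_coe.1 hc₀) hc')) _
      _ = hammingDist z c₀ := hammingDist_add_right z c₀ c'
      _ = distToCode (C : Set (Fin n → F)) z := hd
  refine le_antisymm (key x c hc) ?_
  have := key (x + c) (-c) (neg_mem hc)
  simpa using this

lemma card_sphere (x : Fin n → F) :
    (univ.filter fun y => hammingDist x y = 1).card = n * (Fintype.card F - 1) := by
  have hset : (univ.filter fun y => hammingDist x y = 1)
      = univ.biUnion (fun i : Fin n =>
          (univ.filter (fun a : F => a ≠ x i)).image (fun a => Function.update x i a)) := by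
    ext y
    simp only [mem_filter, mem_univ, true_and, mem_biUnion, mem_image]
    constructor
    · intro hy
      rw [hammingDist_def] at hy
      obtain ⟨i, hi⟩ := Finset.card_eq_one.1 hy
      have hiy : x i ≠ y i := by
        have : i ∈ univ.filter fun j => x j ≠ y j := by rw [hi]; exact mem_singleton_self i
        exact (mem_filter.1 this).2
      refine ⟨i, y i, Ne.symm hiy, ?_⟩
      funext j
      by_cases hj : j = i
      · subst hj; simp
      · have : j ∉ univ.filter fun t => x t ≠ y t := by
          rw [hi]; simp [hj]
        have hxy : ¬ x j ≠ y j := fun hne => this (mem_filter.2 ⟨mem_univ _, hne⟩)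
        push_neg at hxy
        simp [Function.update_of_ne hj, hxy]
    · rintro ⟨i, a, ha, rfl⟩
      rw [hammingDist_def]
      have : (univ.filter fun j => x j ≠ Function.update x i a j) = {i} := by
        ext j
        simp only [mem_filter, mem_univ, true_and, mem_singleton]
        by_cases hj : j = i
        · subst hj; simp [Ne.symm ha]
        · simp [Function.update_of_ne hj, hj]
      rw [this, card_singleton]
  rw [hset, card_biUnion]
  · have : ∀ i : Fin n,
        ((univ.filter (fun a : F => a ≠ x i)).image (fun a => Function.update x i a)).card
          = Fintype.card F - 1 := by
      intro i
      rw [Finset.card_image_of_injective _ (fun a b h => by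
        have := congrFun h i; simpa using this)]
      rw [Finset.filter_ne', Finset.card_erase_of_mem (mem_univ _), Finset.card_univ]
    rw [Finset.sum_congr rfl fun i _ => this i, Finset.sum_const, Finset.card_univ,
      Fintype.card_fin, smul_eq_mul]
  · intro i _ j _ hij
    rw [Function.onFun, Finset.disjoint_left]
    rintro y hy hy'
    obtain ⟨a, ha, rfl⟩ := Finset.mem_image.1 hy
    obtain ⟨b, hb, hba⟩ := Finset.mem_image.1 hy'
    have : Function.update x j b i = a := by rw [hba]; simp
    rw [Function.update_of_ne hij] at this
    exact (Finset.mem_filter.1 ha).2 this.symm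

lemma double_count (P Q : (Fin n → F) → Prop) [DecidablePred P] [DecidablePred Q] :
    ∑ x ∈ univ.filter P, (univ.filter fun y => hammingDist x y = 1 ∧ Q y).card
      = ∑ y ∈ univ.filter Q, (univ.filter fun x => hammingDist y x = 1 ∧ P x).card := by
  have key : ∀ (P' Q' : (Fin n → F) → Prop) (_ : DecidablePred P') (_ : DecidablePred Q'),
      ∑ x ∈ univ.filter P', (univ.filter fun y => hammingDist x y = 1 ∧ Q' y).card
        = ∑ x : Fin n → F, ∑ y : Fin n → F,
            if P' x ∧ hammingDist x y = 1 ∧ Q' y then 1 else 0 := by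
    intro P' Q' _ _
    rw [Finset.sum_filter]
    refine Finset.sum_congr rfl fun x _ => ?_
    by_cases h : P' x
    · simp only [h, if_true, true_and, Finset.card_filter]
    · simp [h]
  have h1 := key P Q ‹_› ‹_›
  have h2 := key Q P ‹_› ‹_›
  refine h1.trans (Eq.trans ?_ h2.symm)
  rw [Finset.sum_comm]
  refine Finset.sum_congr rfl fun x _ => Finset.sum_congr rfl fun y _ => ?_
  refine if_congr ?_ rfl rfl
  rw [hammingDist_comm]
  tauto

lemma norm_two_decomp {u : Fin n → F} (hu : hammingNorm u = 2) :
    ∃ e₁ e₂ : Fin n → F, hammingNorm e₁ = 1 ∧ hammingNorm e₂ = 1 ∧ e₁ ≠ e₂ ∧ u = e₁ + e₂ := by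
  have hdef : (univ.filter fun i => u i ≠ 0).card = 2 := hu
  obtain ⟨i, j, hij, hset⟩ := Finset.card_eq_two.1 hdef
  have hi : u i ≠ 0 := by
    have : i ∈ univ.filter fun t => u t ≠ 0 := by rw [hset]; simp
    exact (mem_filter.1 this).2
  have hj : u j ≠ 0 := by
    have : j ∈ univ.filter fun t => u t ≠ 0 := by rw [hset]; simp
    exact (mem_filter.1 this).2
  have hsingle : ∀ (t : Fin n) (a : F), a ≠ 0 → hammingNorm (Pi.single t a : Fin n → F) = 1 := by
    intro t a ha
    show (univ.filter fun s => (Pi.single t a : Fin n → F) s ≠ 0).card = 1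
    have : (univ.filter fun s => (Pi.single t a : Fin n → F) s ≠ 0) = {t} := by
      ext s
      simp only [mem_filter, mem_univ, true_and, mem_singleton, Pi.single_apply]
      by_cases hs : s = t
      · simp [hs, ha]
      · simp [hs]
    rw [this, card_singleton]
  refine ⟨Pi.single i (u i), Pi.single j (u j), hsingle i _ hi, hsingle j _ hj, ?_, ?_⟩
  · intro h
    have := congrFun h i
    simp [Pi.single_apply, hij, Ne.symm hij] at this
    exact hi this
  · funext t
    by_cases hti : t = i
    · subst hti
      simp [Pi.single_apply, hij, Ne.symm hij]
    by_cases htj : t = j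
    · subst htj
      simp [Pi.single_apply, hti]
    · have : t ∉ univ.filter fun s => u s ≠ 0 := by rw [hset]; simp [hti, htj]
      have h0 : ¬ u t ≠ 0 := fun hne => this (mem_filter.2 ⟨mem_univ _, hne⟩)
      push_neg at h0
      simp [Pi.single_apply, hti, htj, h0]

lemma chain_subgroup (htwo : ∀ x : Fin n → F, x + x = 0)
    (C FF : AddSubgroup (Fin n → F)) (hCF : C ≤ FF) :
    ∀ j : ℕ, 2 ^ j * (C : Set (Fin n → F)).ncard ≤ (FF : Set (Fin n → F)).ncard →
    ∃ (B : AddSubgroup (Fin n → F)) (R : Finset (Fin n → F)),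
      C ≤ B ∧ B ≤ FF ∧ R.card = 2 ^ j ∧ (0 : Fin n → F) ∈ R ∧
      (↑R : Set (Fin n → F)) ⊆ (B : Set (Fin n → F)) ∧
      (∀ x ∈ R, ∀ y ∈ R, x ≠ y → x - y ∉ C) ∧
      ((B : Set (Fin n → F)) = ⋃ x ∈ R, (fun v => x + v) '' (C : Set (Fin n → F))) ∧
      (B : Set (Fin n → F)).ncard = 2 ^ j * (C : Set (Fin n → F)).ncard := by
  have hneg : ∀ x : Fin n → F, -x = x := fun x => neg_eq_of_add_eq_zero_right (htwo x)
  intro j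
  induction j with
  | zero =>
    intro _
    refine ⟨C, {0}, le_rfl, hCF, by simp, by simp, ?_, by simp, ?_, by simp⟩
    · intro z hz
      rw [Finset.mem_coe, Finset.mem_singleton] at hz
      subst hz
      exact SetLike.mem_coe.2 (zero_mem C)
    ext z
    simp only [Set.mem_iUnion, Finset.mem_singleton, Set.mem_image, SetLike.mem_coe]
    constructor
    · intro hz; exact ⟨0, rfl, z, hz, by simp⟩
    · rintro ⟨x, rfl, v, hv, rfl⟩; simpa using hv
  | succ j ih =>
    intro hcard
    have hCpos : 0 < (C : Set (Fin n → F)).ncard :=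
      Set.ncard_pos (Set.toFinite _) |>.2 ⟨0, SetLike.mem_coe.2 (zero_mem C)⟩
    have hj' : 2 ^ j * (C : Set (Fin n → F)).ncard ≤ (FF : Set (Fin n → F)).ncard :=
      le_trans (Nat.mul_le_mul_right _ (Nat.pow_le_pow_right (by norm_num) (Nat.le_succ j))) hcard
    obtain ⟨B, R, hCB, hBF, hRcard, hR0, hRB, hRpair, hBun, hBcard⟩ := ih hj'
    have hlt : (B : Set (Fin n → F)).ncard < (FF : Set (Fin n → F)).ncard := by
      rw [hBcard]
      refine lt_of_lt_of_le ?_ hcard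
      have : (2:ℕ) ^ j < 2 ^ (j+1) := Nat.pow_lt_pow_right (by norm_num) (Nat.lt_succ_self j)
      exact mul_lt_mul_of_pos_right this hCpos
    have hex : ∃ g, g ∈ FF ∧ g ∉ B := by
      by_contra h
      push_neg at h
      have hsub : (FF : Set (Fin n → F)) ⊆ (B : Set (Fin n → F)) := fun z hz => h z hz
      exact absurd (Set.ncard_le_ncard hsub (Set.toFinite _)) (not_le.2 hlt)
    obtain ⟨g, hgF, hgB⟩ := hex
    set B' : AddSubgroup (Fin n → F) :=
      { carrier := (B : Set (Fin n → F)) ∪ (fun v => g + v) '' (B : Set (Fin n → F))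
        add_mem' := by
          rintro a b (ha | ⟨a', ha', rfl⟩) (hb | ⟨b', hb', rfl⟩)
          · exact Or.inl (add_mem ha hb)
          · refine Or.inr ⟨a + b', add_mem ha hb', add_left_comm g a b'⟩
          · refine Or.inr ⟨a' + b, add_mem ha' hb, (add_assoc g a' b).symm⟩
          · refine Or.inl ?_
            have : (g + a') + (g + b') = (g + g) + (a' + b') := by abel
            rw [this, htwo g, zero_add]
            exact add_mem ha' hb'
        zero_mem' := Or.inl (zero_mem B)
        neg_mem' := by intro a ha; rwa [hneg] } with hB'def
    have hmemB' : ∀ z, z ∈ B' ↔ z ∈ B ∨ ∃ b ∈ B, z = g + b := by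
      intro z
      constructor
      · rintro (hz | ⟨b, hb, rfl⟩)
        · exact Or.inl hz
        · exact Or.inr ⟨b, hb, rfl⟩
      · rintro (hz | ⟨b, hb, rfl⟩)
        · exact Or.inl hz
        · exact Or.inr ⟨b, hb, rfl⟩
    set R' : Finset (Fin n → F) := R ∪ R.image (fun r => g + r) with hR'def
    have hdisjR : Disjoint R (R.image (fun r => g + r)) := by
      rw [Finset.disjoint_left]
      intro r hr hr'
      obtain ⟨r', hr'', heq⟩ := Finset.mem_image.1 hr'
      apply hgB
      have : g = r - r' := by rw [← heq]; abel
      rw [this]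
      exact sub_mem (hRB hr) (hRB hr'')
    have hR'card : R'.card = 2 ^ (j + 1) := by
      rw [hR'def, Finset.card_union_of_disjoint hdisjR,
        Finset.card_image_of_injective _ (add_right_injective g), hRcard]
      ring
    refine ⟨B', R', le_trans hCB ?_, ?_, hR'card, Finset.mem_union_left _ hR0, ?_, ?_, ?_, ?_⟩
    · intro z hz; exact Or.inl hz
    · rintro z (hz | ⟨b, hb, rfl⟩)
      · exact hBF hz
      · exact add_mem hgF (hBF hb)
    · intro z hz
      rw [Finset.mem_coe, hR'def, Finset.mem_union] at hz
      rcases hz with hz | hz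
      · exact Or.inl (hRB hz)
      · obtain ⟨r, hr, rfl⟩ := Finset.mem_image.1 hz
        exact Or.inr ⟨r, hRB hr, rfl⟩
    · intro x hx y hy hxy
      rw [hR'def, Finset.mem_union] at hx hy
      rcases hx with hx | hx <;> rcases hy with hy | hy
      · exact hRpair x hx y hy hxy
      · obtain ⟨r, hr, rfl⟩ := Finset.mem_image.1 hy
        intro hC
        apply hgB
        have h2 : (g + r) - x ∈ C := by
          have := neg_mem hC
          rwa [neg_sub] at this
        have hg : g = ((g + r) - x) + (x - r) := by abel
        rw [hg]
        exact add_mem (hCB h2) (sub_mem (hRB hx) (hRB hr))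
      · obtain ⟨r, hr, rfl⟩ := Finset.mem_image.1 hx
        intro hC
        apply hgB
        have hg : g = ((g + r) - y) + (y - r) := by abel
        rw [hg]
        exact add_mem (hCB hC) (sub_mem (hRB hy) (hRB hr))
      · obtain ⟨r, hr, rfl⟩ := Finset.mem_image.1 hx
        obtain ⟨r', hr', rfl⟩ := Finset.mem_image.1 hy
        have hrr' : r ≠ r' := fun h => hxy (by rw [h])
        have : (g + r) - (g + r') = r - r' := by abel
        rw [this]
        exact hRpair r hr r' hr' hrr'
    · have hBmem : ∀ z : Fin n → F, z ∈ B ↔ ∃ r ∈ R, ∃ c ∈ C, z = r + c := by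
        intro z
        constructor
        · intro hz
          have hz' : z ∈ ⋃ x ∈ R, (fun v => x + v) '' (C : Set (Fin n → F)) := by
            rw [← hBun]; exact SetLike.mem_coe.2 hz
          simp only [Set.mem_iUnion, Set.mem_image, SetLike.mem_coe] at hz'
          obtain ⟨r, hr, c, hc, hzc⟩ := hz'
          exact ⟨r, hr, c, hc, hzc.symm⟩
        · rintro ⟨r, hr, c, hc, rfl⟩
          have : r + c ∈ ⋃ x ∈ R, (fun v => x + v) '' (C : Set (Fin n → F)) := by
            simp only [Set.mem_iUnion, Set.mem_image, SetLike.mem_coe]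
            exact ⟨r, hr, c, hc, rfl⟩
          rw [← hBun] at this
          exact SetLike.mem_coe.1 this
      ext z
      simp only [Set.mem_iUnion, Set.mem_image, SetLike.mem_coe, hR'def, Finset.mem_union,
        Finset.mem_image]
      constructor
      · intro hz
        rcases (hmemB' z).1 hz with hz' | ⟨b, hb, rfl⟩
        · obtain ⟨r, hr, c, hc, rfl⟩ := (hBmem z).1 hz'
          exact ⟨r, Or.inl hr, c, hc, rfl⟩
        · obtain ⟨r, hr, c, hc, rfl⟩ := (hBmem b).1 hb
          exact ⟨g + r, Or.inr ⟨r, hr, rfl⟩, c, hc, add_assoc g r c⟩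
      · rintro ⟨x, hx, c, hc, rfl⟩
        rcases hx with hx | ⟨r, hr, rfl⟩
        · exact (hmemB' _).2 (Or.inl ((hBmem _).2 ⟨x, hx, c, hc, rfl⟩))
        · refine (hmemB' _).2 (Or.inr ⟨r + c, (hBmem _).2 ⟨r, hr, c, hc, rfl⟩, ?_⟩)
          rw [add_assoc]
    · have hdisj : Disjoint (B : Set (Fin n → F))
          ((fun v => g + v) '' (B : Set (Fin n → F))) := by
        rw [Set.disjoint_left]
        rintro z hzB ⟨b, hb, heq⟩
        apply hgB
        have heq' : g + b = z := heq
        have : g = z - b := by rw [← heq']; abel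
        rw [this]
        exact sub_mem hzB hb
      have hcarrier : (B' : Set (Fin n → F))
          = (B : Set (Fin n → F)) ∪ ((fun v => g + v) '' (B : Set (Fin n → F))) := rfl
      rw [hcarrier, Set.ncard_union_eq hdisj (Set.toFinite _) (Set.toFinite _),
        Set.ncard_image_of_injective _ (add_right_injective g), hBcard]
      ring

end Stmt18

set_option maxHeartbeats 1000000 in
/-- Let `p`, `q` be powers of 2 with `q ≤ p^{2m}`, `n = (p^{2m}−1)/(p−1)`,
and let `C ⊆ F_p^n` be an additive code which is completely regular with covering radius 3
and intersection array `{p^{2m}−1, p^{2m}−q, 1; 1, q, p^{2m}−1}`.  Then for every `k` which is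
a power of 2 with `1 ≤ k ≤ p^{2m}/q − 1` there is an ADDITIVE code `B_k ⊆ F_p^n`
(a subgroup of `(F_p^n, +)`) which is a union of exactly `k` (pairwise distinct) cosets
of `C` and is completely regular with covering radius 3 and
intersection array `{p^{2m}−1, p^{2m}−kq, 1; 1, kq, p^{2m}−1}`. -/
theorem stmt_18 (p q m n : ℕ)
    (hp : ∃ s, 1 ≤ s ∧ p = 2 ^ s) (hq : ∃ s, 1 ≤ s ∧ q = 2 ^ s)
    (hqle : q ≤ p ^ (2 * m)) (hn : n = (p ^ (2 * m) - 1) / (p - 1))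
    (F : Type) [Field F] [Fintype F] [DecidableEq F] (hcF : Fintype.card F = p)
    (C : AddSubgroup (Fin n → F))
    (hCR : IsCompletelyRegular (C : Set (Fin n → F)) 3
      (fun i => if i = 0 then p ^ (2 * m) - 1 else if i = 1 then p ^ (2 * m) - q else 1)
      (fun i => if i = 1 then 1 else if i = 2 then q else p ^ (2 * m) - 1)) :
    ∀ k : ℕ, (∃ j, k = 2 ^ j) → 1 ≤ k → k ≤ p ^ (2 * m) / q - 1 →
      ∃ (B : AddSubgroup (Fin n → F)) (R : Finset (Fin n → F)),
        R.card = k ∧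
        (∀ x ∈ R, ∀ y ∈ R, x ≠ y → x - y ∉ C) ∧
        (B : Set (Fin n → F)) = ⋃ x ∈ R, (fun v => x + v) '' (C : Set (Fin n → F)) ∧
        IsCompletelyRegular (B : Set (Fin n → F)) 3
          (fun i => if i = 0 then p ^ (2 * m) - 1
                    else if i = 1 then p ^ (2 * m) - k * q else 1)
          (fun i => if i = 1 then 1 else if i = 2 then k * q else p ^ (2 * m) - 1) := by
  classical
  intro k hkpow hk1 hkle
  obtain ⟨s, hs1, hps⟩ := hp
  obtain ⟨s', hs'1, hqs⟩ := hq
  obtain ⟨j, hkj⟩ := hkpow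
  set N := p ^ (2 * m) with hNdef
  -- ## numeric facts
  have hp2 : 2 ≤ p := by
    rw [hps]
    calc (2:ℕ) = 2 ^ 1 := (pow_one 2).symm
      _ ≤ 2 ^ s := Nat.pow_le_pow_right (by norm_num) hs1
  have hq2 : 2 ≤ q := by
    rw [hqs]
    calc (2:ℕ) = 2 ^ 1 := (pow_one 2).symm
      _ ≤ 2 ^ s' := Nat.pow_le_pow_right (by norm_num) hs'1
  have hN2 : 2 ≤ N := le_trans hq2 hqle
  have hNpow : N = 2 ^ (s * (2 * m)) := by rw [hNdef, hps, ← pow_mul]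
  have hs'le : s' ≤ s * (2 * m) := by
    refine (Nat.pow_le_pow_iff_right (a := 2) (by norm_num)).1 ?_
    rw [← hqs, ← hNpow]; exact hqle
  have hqdvd : q ∣ N := by
    rw [hqs, hNpow]; exact pow_dvd_pow 2 hs'le
  set u := N / q with hudef
  have hNu : q * u = N := Nat.mul_div_cancel' hqdvd
  have hu2 : 2 ≤ u := by omega
  have hkq2 : 2 ≤ k * q := le_trans hq2 (Nat.le_mul_of_pos_left q hk1)
  have hkqN : k * q + q ≤ N := by
    have h1 : (k + 1) * q ≤ u * q := Nat.mul_le_mul_right q (by omega)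
    calc k * q + q = (k + 1) * q := by ring
      _ ≤ u * q := h1
      _ = N := by rw [mul_comm]; exact hNu
  -- ## characteristic two
  have hchar2 : (2 : F) = 0 := by
    have hprime : (ringChar F).Prime := CharP.char_is_prime F (ringChar F)
    have hcast : ((Fintype.card F : ℕ) : F) = 0 := FiniteField.cast_card_eq_zero F
    have hdvd2 : ringChar F ∣ 2 ^ s := by
      rw [← hps, ← hcF]
      exact (CharP.cast_eq_zero_iff F (ringChar F) (Fintype.card F)).1 hcast
    have hr2 : ringChar F = 2 :=
      (Nat.prime_dvd_prime_iff_eq hprime Nat.prime_two).1 (hprime.dvd_of_dvd_pow hdvd2)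
    have := CharP.cast_eq_zero F (ringChar F)
    rw [hr2] at this
    exact_mod_cast this
  have htwo : ∀ x : Fin n → F, x + x = 0 := by
    intro x; funext i
    show x i + x i = 0
    rw [← two_mul, hchar2, zero_mul]
  have hneg : ∀ x : Fin n → F, -x = x := fun x => neg_eq_of_add_eq_zero_right (htwo x)
  have hsub : ∀ x y : Fin n → F, x - y = x + y := by
    intro x y; rw [sub_eq_add_neg, hneg]
  have haddadd : ∀ x y : Fin n → F, x + y + y = x := by
    intro x y; rw [add_assoc, htwo, add_zero]
  -- ## sphere size
  have hpn1 : (p - 1) ∣ (N - 1) := by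
    have := Nat.sub_dvd_pow_sub_pow p 1 (2 * m)
    simpa using this
  have hsph : ∀ x : Fin n → F, (univ.filter fun y => hammingDist x y = 1).card = N - 1 := by
    intro x
    rw [Stmt18.card_sphere x, hcF]
    rw [hn]
    exact Nat.div_mul_cancel hpn1
  -- ## distance to C : basic facts
  obtain ⟨hcov, -, hmain⟩ := hCR
  set dC : (Fin n → F) → ℕ := distToCode (C : Set (Fin n → F)) with hdCdef
  have hCne : (C : Set (Fin n → F)).Nonempty := ⟨0, SetLike.mem_coe.2 (zero_mem C)⟩
  have hdC0 : ∀ x, dC x = 0 ↔ x ∈ C := by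
    intro x
    rw [hdCdef, Stmt18.distToCode_eq_zero hCne x, SetLike.mem_coe]
  have hdCle : ∀ x, dC x ≤ 3 := hcov
  have hdCnorm : ∀ v, dC v ≤ hammingNorm v := by
    intro v
    have := Stmt18.distToCode_le (C : Set (Fin n → F)) (SetLike.mem_coe.2 (zero_mem C)) v
    rwa [hammingDist_zero_right] at this
  have hdist_norm : ∀ x y : Fin n → F, hammingDist x y = hammingNorm (x + y) := by
    intro x y; rw [hammingDist_eq_hammingNorm, hneg]
  have hinv : ∀ (x : Fin n → F) {c}, c ∈ C → dC (x + c) = dC x :=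
    fun x c hc => Stmt18.distToCode_add_mem C x hc
  have hdCattain : ∀ v, ∃ c ∈ C, hammingNorm (v + c) = dC v := by
    intro v
    obtain ⟨c, hc, hd⟩ := Stmt18.distToCode_spec (C : Set (Fin n → F)) hCne v
    exact ⟨c, SetLike.mem_coe.1 hc, by rw [← hdist_norm]; exact hd⟩
  -- ## intersection array facts, as ncard statements
  have hb0 : ∀ x, dC x = 0 → {y | hammingDist x y = 1 ∧ dC y = 1}.ncard = N - 1 := by
    intro x hx
    have := (hmain 0 (by norm_num) x hx).1 (by norm_num)
    simpa using this
  have hc1 : ∀ x, dC x = 1 → {y | hammingDist x y = 1 ∧ dC y = 0}.ncard = 1 := by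
    intro x hx
    have := (hmain 1 (by norm_num) x hx).2 (by norm_num)
    simpa using this
  have hb1 : ∀ x, dC x = 1 → {y | hammingDist x y = 1 ∧ dC y = 2}.ncard = N - q := by
    intro x hx
    have := (hmain 1 (by norm_num) x hx).1 (by norm_num)
    simpa using this
  have hc2 : ∀ x, dC x = 2 → {y | hammingDist x y = 1 ∧ dC y = 1}.ncard = q := by
    intro x hx
    have := (hmain 2 (by norm_num) x hx).2 (by norm_num)
    simpa using this
  have hb2 : ∀ x, dC x = 2 → {y | hammingDist x y = 1 ∧ dC y = 3}.ncard = 1 := by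
    intro x hx
    have := (hmain 2 (by norm_num) x hx).1 (by norm_num)
    simpa using this
  have hc3 : ∀ x, dC x = 3 → {y | hammingDist x y = 1 ∧ dC y = 2}.ncard = N - 1 := by
    intro x hx
    have := (hmain 3 (by norm_num) x hx).2 (by norm_num)
    simpa using this
  -- ## ncard ↔ Finset.card conversion
  have hconv : ∀ (x : Fin n → F) (P : (Fin n → F) → Prop)
      [DecidablePred fun y => hammingDist x y = 1 ∧ P y],
      {y | hammingDist x y = 1 ∧ P y}.ncard
        = (univ.filter fun y => hammingDist x y = 1 ∧ P y).card := by
    intro x P _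
    rw [← Set.ncard_coe_finset]
    congr 1
    ext y
    simp
  -- Finset versions
  have hb0f : ∀ x, dC x = 0 →
      (univ.filter fun y => hammingDist x y = 1 ∧ dC y = 1).card = N - 1 := by
    intro x hx; rw [← hconv]; exact hb0 x hx
  have hc1f : ∀ x, dC x = 1 →
      (univ.filter fun y => hammingDist x y = 1 ∧ dC y = 0).card = 1 := by
    intro x hx; rw [← hconv]; exact hc1 x hx
  have hb1f : ∀ x, dC x = 1 →
      (univ.filter fun y => hammingDist x y = 1 ∧ dC y = 2).card = N - q := by
    intro x hx; rw [← hconv]; exact hb1 x hx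
  have hc2f : ∀ x, dC x = 2 →
      (univ.filter fun y => hammingDist x y = 1 ∧ dC y = 1).card = q := by
    intro x hx; rw [← hconv]; exact hc2 x hx
  have hb2f : ∀ x, dC x = 2 →
      (univ.filter fun y => hammingDist x y = 1 ∧ dC y = 3).card = 1 := by
    intro x hx; rw [← hconv]; exact hb2 x hx
  have hc3f : ∀ x, dC x = 3 →
      (univ.filter fun y => hammingDist x y = 1 ∧ dC y = 2).card = N - 1 := by
    intro x hx; rw [← hconv]; exact hc3 x hx
  -- ## "all neighbours" upgrades
  have hall : ∀ (x : Fin n → F) (P : (Fin n → F) → Prop)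
      [DecidablePred fun y => hammingDist x y = 1 ∧ P y],
      (univ.filter fun y => hammingDist x y = 1 ∧ P y).card = N - 1 →
      ∀ y, hammingDist x y = 1 → P y := by
    intro x P _ hcard y hy
    have hsubf : (univ.filter fun y => hammingDist x y = 1 ∧ P y)
        ⊆ (univ.filter fun y => hammingDist x y = 1) := by
      intro z hz
      exact mem_filter.2 ⟨mem_univ _, (mem_filter.1 hz).2.1⟩
    have heq := Finset.eq_of_subset_of_card_le hsubf (by rw [hsph x, hcard])
    have hy' : y ∈ univ.filter fun y => hammingDist x y = 1 :=
      mem_filter.2 ⟨mem_univ _, hy⟩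
    rw [← heq] at hy'
    exact (mem_filter.1 hy').2.2
  have hb0' : ∀ x, dC x = 0 → ∀ y, hammingDist x y = 1 → dC y = 1 :=
    fun x hx => hall x _ (hb0f x hx)
  have hc3' : ∀ x, dC x = 3 → ∀ y, hammingDist x y = 1 → dC y = 2 :=
    fun x hx => hall x _ (hc3f x hx)
  -- ## weight-one words are at distance 1
  have hdC00 : dC 0 = 0 := (hdC0 0).2 (zero_mem C)
  have hwt1 : ∀ e : Fin n → F, hammingNorm e = 1 → dC e = 1 := by
    intro e he
    have h1 : hammingDist 0 e = 1 := by rw [hammingDist_comm, hammingDist_zero_right]; exact he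
    exact hb0' 0 hdC00 e h1
  -- ## minimum distance ≥ 3
  have hsmall : ∀ v : Fin n → F, v ∈ C → hammingNorm v ≤ 2 → v = 0 := by
    intro v hv hwt
    by_contra hv0
    interval_cases hval : hammingNorm v
    · exact hv0 (hammingNorm_eq_zero.1 hval)
    · have := hwt1 v hval
      rw [(hdC0 v).2 hv] at this
      omega
    · obtain ⟨e₁, e₂, he₁, he₂, hne, hsum⟩ := Stmt18.norm_two_decomp hval
      have hdCe1 : dC e₁ = 1 := hwt1 e₁ he₁
      have h0mem : (0 : Fin n → F) ∈ {y | hammingDist e₁ y = 1 ∧ dC y = 0} := by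
        constructor
        · rw [hammingDist_zero_right]; exact he₁
        · exact hdC00
      have hvmem : v ∈ {y | hammingDist e₁ y = 1 ∧ dC y = 0} := by
        constructor
        · rw [hdist_norm, hsum]
          have : e₁ + (e₁ + e₂) = e₂ := by rw [← add_assoc, htwo, zero_add]
          rw [this]; exact he₂
        · exact (hdC0 v).2 hv
      have h2le : 2 ≤ {y | hammingDist e₁ y = 1 ∧ dC y = 0}.ncard := by
        have := Set.one_lt_ncard_iff (Set.toFinite _) |>.2 ⟨0, v, h0mem, hvmem, Ne.symm hv0⟩
        omega
      rw [hc1 e₁ hdCe1] at h2le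
      omega
  -- ## closure of {dC ∈ {0,3}}
  have hFadd : ∀ x y : Fin n → F, (dC x = 0 ∨ dC x = 3) → (dC y = 0 ∨ dC y = 3) →
      (dC (x + y) = 0 ∨ dC (x + y) = 3) := by
    intro x y hx hy
    rcases hx with hx0 | hx3
    · rcases hy with hy0 | hy3
      · left
        rw [(hdC0 _)]
        exact add_mem ((hdC0 x).1 hx0) ((hdC0 y).1 hy0)
      · right
        rw [add_comm, hinv y ((hdC0 x).1 hx0)]
        exact hy3
    · rcases hy with hy0 | hy3
      · right
        rw [hinv x ((hdC0 y).1 hy0)]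
        exact hx3
      · by_cases hmem : dC (x + y) = 0
        · exact Or.inl hmem
        right
        have hle := hdCle (x + y)
        have hne1 : dC (x + y) ≠ 1 := by
          intro h1
          obtain ⟨c, hc, hwc⟩ := hdCattain (x + y)
          rw [h1] at hwc
          set e := x + y + c with hedef
          have hxe : hammingDist x (x + e) = 1 := by
            rw [hdist_norm, ← add_assoc, htwo, zero_add]
            exact hwc
          have hval : dC (x + e) = 2 := hc3' x hx3 _ hxe
          have hxeyc : x + e = y + c := by
            rw [hedef, ← add_assoc, ← add_assoc, htwo, zero_add]
          rw [hxeyc, hinv y hc, hy3] at hval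
          omega
        have hne2 : dC (x + y) ≠ 2 := by
          intro h2
          obtain ⟨c, hc, hwc⟩ := hdCattain (x + y)
          rw [h2] at hwc
          obtain ⟨e₁, e₂, he₁, he₂, hne, hsum⟩ := Stmt18.norm_two_decomp hwc
          set z := x + e₁ with hzdef
          have hxz : hammingDist x z = 1 := by
            rw [hdist_norm, hzdef, ← add_assoc, htwo, zero_add]
            exact he₁
          have hz2 : dC z = 2 := hc3' x hx3 z hxz
          have hzx : hammingDist z x = 1 := by rw [hammingDist_comm]; exact hxz
          have hzyc : hammingDist z (y + c) = 1 := by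
            rw [hdist_norm]
            have : z + (y + c) = e₂ := by
              rw [hzdef]
              have h1 : x + e₁ + (y + c) = (x + y + c) + e₁ := by abel
              rw [h1, hsum]
              have h2 : e₁ + e₂ + e₁ = e₂ := by
                rw [add_comm e₁ e₂, add_assoc, htwo, add_zero]
              exact h2
            rw [this]; exact he₂
          have hyc3 : dC (y + c) = 3 := by rw [hinv y hc]; exact hy3
          have hxyc : x ≠ y + c := by
            intro heq
            apply hmem
            rw [hdC0]
            have hxyeq : x + y = c := by
              rw [heq]
              calc y + c + y = c + (y + y) := by abel
                _ = c := by rw [htwo, add_zero]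
            rw [hxyeq]
            exact hc
          have hxmem : x ∈ {v | hammingDist z v = 1 ∧ dC v = 3} := ⟨hzx, hx3⟩
          have hymem : y + c ∈ {v | hammingDist z v = 1 ∧ dC v = 3} := ⟨hzyc, hyc3⟩
          have h2le : 2 ≤ {v | hammingDist z v = 1 ∧ dC v = 3}.ncard :=
            Set.one_lt_ncard_iff (Set.toFinite _) |>.2 ⟨x, y + c, hxmem, hymem, hxyc⟩
          rw [hb2 z hz2] at h2le
          omega
        omega
  
  -- ## the subgroup FF = C ∪ {dC = 3}
  set FF : AddSubgroup (Fin n → F) :=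
    { carrier := {x | dC x = 0 ∨ dC x = 3}
      add_mem' := fun {a b} ha hb => hFadd a b ha hb
      zero_mem' := Or.inl hdC00
      neg_mem' := by intro a ha; rwa [hneg] } with hFFdef
  have hFFmem : ∀ x : Fin n → F, x ∈ FF ↔ (dC x = 0 ∨ dC x = 3) := fun x => Iff.rfl
  have hCF : C ≤ FF := fun c hc => Or.inl ((hdC0 c).2 hc)
  -- ## layer sizes
  set cC := (C : Set (Fin n → F)).ncard with hcCdef
  have hcC0 : (univ.filter fun x : Fin n → F => dC x = 0).card = cC := by
    rw [hcCdef, ← Set.ncard_coe_finset (univ.filter fun x : Fin n → F => dC x = 0)]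
    congr 1
    ext x
    simp [hdC0]
  have hcCpos : 0 < cC := Set.ncard_pos (Set.toFinite _) |>.2 hCne
  have hedge : ∀ (i v w : ℕ),
      (∀ x, dC x = i → (univ.filter fun y => hammingDist x y = 1 ∧ dC y = i+1).card = v) →
      (∀ y, dC y = i+1 → (univ.filter fun x => hammingDist y x = 1 ∧ dC x = i).card = w) →
      (univ.filter fun x : Fin n → F => dC x = i).card * v
        = (univ.filter fun x : Fin n → F => dC x = i+1).card * w := by
    intro i v w hv hw
    have hdc := Stmt18.double_count (fun x : Fin n → F => dC x = i) (fun y => dC y = i+1)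
    rw [Finset.sum_congr rfl (fun x hx => hv x (mem_filter.1 hx).2),
        Finset.sum_congr rfl (fun y hy => hw y (mem_filter.1 hy).2),
        Finset.sum_const, Finset.sum_const, smul_eq_mul, smul_eq_mul] at hdc
    exact hdc
  have hE01 := hedge 0 (N-1) 1 (fun x hx => hb0f x hx) (fun y hy => hc1f y hy)
  have hE12 := hedge 1 (N-q) q (fun x hx => hb1f x hx) (fun y hy => hc2f y hy)
  have hE23 := hedge 2 1 (N-1) (fun x hx => hb2f x hx) (fun y hy => hc3f y hy)
  have hN1pos : 0 < N - 1 := by omega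
  have hqpos : 0 < q := by omega
  set L1 := (univ.filter fun x : Fin n → F => dC x = 1).card with hL1def
  set L2 := (univ.filter fun x : Fin n → F => dC x = 2).card with hL2def
  set L3 := (univ.filter fun x : Fin n → F => dC x = 3).card with hL3def
  rw [hcC0] at hE01
  have hL1v : L1 = cC * (N - 1) := by rw [mul_one] at hE01; exact hE01.symm
  have hL23 : L2 = L3 * (N - 1) := by rw [mul_one] at hE23; exact hE23
  have hL3q : cC * (N - q) = L3 * q := by
    refine Nat.eq_of_mul_eq_mul_left hN1pos ?_
    calc (N-1) * (cC * (N-q)) = (cC * (N-1)) * (N-q) := by ring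
      _ = L1 * (N - q) := by rw [hL1v]
      _ = L2 * q := hE12
      _ = (L3 * (N-1)) * q := by rw [hL23]
      _ = (N-1) * (L3 * q) := by ring
  obtain ⟨u', huu'⟩ : ∃ u', u = u' + 1 := ⟨u - 1, by omega⟩
  have hNq : N - q = q * (u - 1) := by
    have hN' : N = q * u' + q := by rw [← hNu, huu']; ring
    rw [huu', hN']
    simp
  have hL3v : L3 = cC * (u - 1) := by
    have h3 : q * (cC * (u-1)) = q * L3 := by
      calc q * (cC * (u-1)) = cC * (q * (u-1)) := by ring
        _ = cC * (N - q) := by rw [← hNq]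
        _ = L3 * q := hL3q
        _ = q * L3 := by ring
    exact (Nat.eq_of_mul_eq_mul_left hqpos h3).symm
  have hFFcard : (FF : Set (Fin n → F)).ncard = cC * u := by
    have hFFfin : (FF : Set (Fin n → F))
        = ↑(univ.filter fun x : Fin n → F => dC x = 0 ∨ dC x = 3) := by
      ext x
      rw [SetLike.mem_coe, hFFmem x, Finset.mem_coe, Finset.mem_filter]
      simp
    rw [hFFfin, Set.ncard_coe_finset]
    have hsplit : (univ.filter fun x : Fin n → F => dC x = 0 ∨ dC x = 3)
        = (univ.filter fun x : Fin n → F => dC x = 0)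
          ∪ (univ.filter fun x : Fin n → F => dC x = 3) := Finset.filter_or _ _ _
    rw [hsplit, Finset.card_union_of_disjoint (by
      rw [Finset.disjoint_left]
      intro a ha ha'
      have h1 := (mem_filter.1 ha).2
      have h2 := (mem_filter.1 ha').2
      omega)]
    rw [hcC0, ← hL3def, hL3v, huu']
    simp only [Nat.add_sub_cancel]
    ring
  -- ## the subgroup B via the chain lemma
  have hchainhyp : 2 ^ j * cC ≤ (FF : Set (Fin n → F)).ncard := by
    rw [hFFcard, ← hkj]
    calc k * cC ≤ u * cC := Nat.mul_le_mul_right _ (by omega)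
      _ = cC * u := mul_comm u cC
  obtain ⟨B, R, hCB, hBF, hRcard, hR0, hRB, hRpair, hBun, hBcard⟩ :=
    Stmt18.chain_subgroup htwo C FF hCF j hchainhyp
  rw [← hkj] at hRcard hBcard
  -- ## distance to B
  set dB : (Fin n → F) → ℕ := distToCode (B : Set (Fin n → F)) with hdBdef
  have hBne : (B : Set (Fin n → F)).Nonempty := ⟨0, SetLike.mem_coe.2 (zero_mem B)⟩
  have hdB0 : ∀ x, dB x = 0 ↔ x ∈ B := by
    intro x
    rw [hdBdef, Stmt18.distToCode_eq_zero hBne x, SetLike.mem_coe]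
  have hCsubB : (C : Set (Fin n → F)) ⊆ (B : Set (Fin n → F)) :=
    fun z hz => SetLike.mem_coe.2 (hCB (SetLike.mem_coe.1 hz))
  have hdBledC : ∀ x, dB x ≤ dC x := fun x => Stmt18.distToCode_mono hCsubB hCne x
  have hdBle3 : ∀ x, dB x ≤ 3 := fun x => le_trans (hdBledC x) (hdCle x)
  have hdBattain : ∀ v, ∃ b ∈ B, hammingNorm (v + b) = dB v := by
    intro v
    obtain ⟨b, hb, hd⟩ := Stmt18.distToCode_spec (B : Set (Fin n → F)) hBne v
    exact ⟨b, SetLike.mem_coe.1 hb, by rw [← hdist_norm]; exact hd⟩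
  have hdBnorm : ∀ v b, b ∈ B → dB v ≤ hammingNorm (v + b) := by
    intro v b hb
    have := Stmt18.distToCode_le (B : Set (Fin n → F)) (SetLike.mem_coe.2 hb) v
    rwa [hdist_norm] at this
  have hRmem : ∀ r ∈ R, r ∈ B := fun r hr => SetLike.mem_coe.1 (hRB (Finset.mem_coe.2 hr))
  have hBFF : ∀ b, b ∈ B → (dC b = 0 ∨ dC b = 3) := fun b hb => (hFFmem b).1 (hBF hb)
  have hBC3 : ∀ x, x ∈ FF → x ∉ B → dC x = 3 := by
    intro x hxF hxB
    rcases (hFFmem x).1 hxF with h0 | h3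
    · exact absurd (hCB ((hdC0 x).1 h0)) hxB
    · exact h3
  have hxrF : ∀ x r : Fin n → F, x ∉ FF → r ∈ FF → x + r ∉ FF := by
    intro x r hx hr hxr
    apply hx
    have h := add_mem hxr hr
    rwa [haddadd] at h
  have hdC12 : ∀ x, x ∉ FF → (dC x = 1 ∨ dC x = 2) := by
    intro x hx
    have h3 := hdCle x
    have hno : ¬(dC x = 0 ∨ dC x = 3) := fun h => hx ((hFFmem x).2 h)
    omega
  -- ## the three distance characterizations for B
  have hdB3 : ∀ x, x ∈ FF → x ∉ B → dB x = 3 := by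
    intro x hxF hxB
    refine le_antisymm (hdBle3 x) ?_
    obtain ⟨b, hb, hwb⟩ := hdBattain x
    have hxbF : x + b ∈ FF := add_mem hxF (hBF hb)
    have hxbC : x + b ∉ C := by
      intro hc
      apply hxB
      have hxe : x = (x + b) + b := (haddadd x b).symm
      rw [hxe]
      exact add_mem (hCB hc) hb
    have h3 : dC (x + b) = 3 := by
      rcases (hFFmem _).1 hxbF with h0 | h3
      · exact absurd ((hdC0 _).1 h0) hxbC
      · exact h3
    calc 3 = dC (x+b) := h3.symm
      _ ≤ hammingNorm (x+b) := hdCnorm _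
      _ = dB x := hwb
  have hdB1 : ∀ x, x ∉ FF → ∀ b, b ∈ B → dC (x + b) = 1 → dB x = 1 := by
    intro x hxF b hb h1
    have hxB : x ∉ B := fun h => hxF (hBF h)
    have hge : dB x ≠ 0 := fun h => hxB ((hdB0 x).1 h)
    have hle : dB x ≤ 1 := by
      obtain ⟨c, hc, hwc⟩ := hdCattain (x + b)
      rw [h1] at hwc
      have hle' : dB x ≤ hammingNorm (x + (b + c)) := hdBnorm x (b+c) (add_mem hb (hCB hc))
      rw [← add_assoc] at hle'
      rw [hwc] at hle'
      exact hle'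
    omega
  have hdB2 : ∀ x, x ∉ FF → (∀ b, b ∈ B → dC (x + b) ≠ 1) → dB x = 2 := by
    intro x hxF hno
    have hxB : x ∉ B := fun h => hxF (hBF h)
    have hdCx : dC x = 2 := by
      rcases hdC12 x hxF with h1 | h2
      · have hz := hno 0 (zero_mem B)
        rw [add_zero] at hz
        exact absurd h1 hz
      · exact h2
    have hle : dB x ≤ 2 := by rw [← hdCx]; exact hdBledC x
    have hne0 : dB x ≠ 0 := fun h => hxB ((hdB0 x).1 h)
    have hne1 : dB x ≠ 1 := by
      intro h1
      obtain ⟨b, hb, hwb⟩ := hdBattain x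
      rw [h1] at hwb
      have hd1 : dC (x + b) ≤ 1 := le_trans (hdCnorm _) (le_of_eq hwb)
      have hne0' : dC (x + b) ≠ 0 := by
        intro h0
        apply hxB
        have hxe : x = (x + b) + b := (haddadd x b).symm
        rw [hxe]
        exact add_mem (hCB ((hdC0 _).1 h0)) hb
      exact hno b hb (by omega)
    omega
  -- ## full case analysis
  have hcase : ∀ x : Fin n → F, (x ∈ B ∧ dB x = 0) ∨ (x ∈ FF ∧ x ∉ B ∧ dB x = 3)
      ∨ (x ∉ FF ∧ dB x = 1 ∧ ∃ r ∈ R, dC (x + r) = 1)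
      ∨ (x ∉ FF ∧ dB x = 2 ∧ ∀ b, b ∈ B → dC (x + b) ≠ 1) := by
    intro x
    by_cases hxB : x ∈ B
    · exact Or.inl ⟨hxB, (hdB0 x).2 hxB⟩
    by_cases hxF : x ∈ FF
    · exact Or.inr (Or.inl ⟨hxF, hxB, hdB3 x hxF hxB⟩)
    by_cases hex : ∃ b, b ∈ B ∧ dC (x + b) = 1
    · obtain ⟨b, hb, h1⟩ := hex
      have hbU : b ∈ ⋃ r ∈ R, (fun v => r + v) '' (C : Set (Fin n → F)) := by
        rw [← hBun]; exact SetLike.mem_coe.2 hb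
      simp only [Set.mem_iUnion, Set.mem_image, SetLike.mem_coe] at hbU
      obtain ⟨r, hr, c, hc, hbrc⟩ := hbU
      have h1' : dC (x + r) = 1 := by
        have hbeq : x + b = (x + r) + c := by rw [← hbrc, add_assoc]
        rw [hbeq, hinv (x+r) hc] at h1
        exact h1
      exact Or.inr (Or.inr (Or.inl ⟨hxF, hdB1 x hxF r (hRmem r hr) h1', r, hr, h1'⟩))
    · push_neg at hex
      exact Or.inr (Or.inr (Or.inr ⟨hxF, hdB2 x hxF (fun b hb => hex b hb),
        fun b hb => hex b hb⟩))
  -- ## locator uniqueness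
  have hLU : ∀ v f f' : Fin n → F, f ∈ FF → f' ∈ FF → dC (v + f) = 1 → dC (v + f') = 1 →
      f - f' ∈ C := by
    intro v f f' hf hf' h1 h1'
    by_contra hwC
    have hwFF : f - f' ∈ FF := sub_mem hf hf'
    have hw3 : dC (f - f') = 3 := by
      rcases (hFFmem _).1 hwFF with h0 | h3
      · exact absurd ((hdC0 _).1 h0) hwC
      · exact h3
    rw [hsub] at hw3
    obtain ⟨c, hc, hwc⟩ := hdCattain (v + f)
    rw [h1] at hwc
    have hvf' : v + f' = ((f + f') + (v + f + c)) + c := by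
      have habel : ((f + f') + (v + f + c)) + c = (v + f') + ((f + f) + (c + c)) := by abel
      rw [habel, htwo, htwo, add_zero, add_zero]
    have hnb : hammingDist (f + f') ((f + f') + (v + f + c)) = 1 := by
      rw [hdist_norm, ← add_assoc, htwo, zero_add]
      exact hwc
    have h2 : dC ((f + f') + (v + f + c)) = 2 := hc3' (f + f') hw3 _ hnb
    rw [hvf', hinv _ hc] at h1'
    omega
  have hRuniq : ∀ v r r' : Fin n → F, r ∈ R → r' ∈ R → dC (v + r) = 1 → dC (v + r') = 1 →
      r = r' := by
    intro v r r' hr hr' h1 h1'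
    by_contra hne
    exact hRpair r hr r' hr' hne
      (hLU v r r' (hBF (hRmem r hr)) (hBF (hRmem r' hr')) h1 h1')
  -- ## translated neighbour counts
  have htransl : ∀ (x r : Fin n → F) (v : ℕ),
      (univ.filter fun y => hammingDist x y = 1 ∧ dC (y + r) = v).card
        = (univ.filter fun z => hammingDist (x + r) z = 1 ∧ dC z = v).card := by
    intro x r v
    have himg : (univ.filter fun z => hammingDist (x + r) z = 1 ∧ dC z = v)
        = (univ.filter fun y => hammingDist x y = 1 ∧ dC (y + r) = v).image (· + r) := by
      ext z
      simp only [mem_image, mem_filter, mem_univ, true_and]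
      constructor
      · rintro ⟨hd, hv⟩
        refine ⟨z + r, ⟨?_, ?_⟩, haddadd z r⟩
        · have heq : hammingDist x (z + r) = hammingDist (x + r) (z + r + r) :=
            (Stmt18.hammingDist_add_right x (z+r) r).symm
          rw [heq, haddadd]
          exact hd
        · rw [haddadd]; exact hv
      · rintro ⟨y, ⟨hd, hv⟩, rfl⟩
        constructor
        · rw [Stmt18.hammingDist_add_right]; exact hd
        · exact hv
    rw [himg, Finset.card_image_of_injective _ (add_left_injective r)]
  have hV1 : ∀ (x r : Fin n → F), dC (x + r) = 1 →
      (univ.filter fun y => hammingDist x y = 1 ∧ dC (y + r) = 1).card = q - 2 := by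
    intro x r h1
    rw [htransl x r 1]
    have hfib := Finset.card_eq_sum_card_fiberwise
      (f := dC) (s := univ.filter fun z => hammingDist (x + r) z = 1) (t := Finset.range 4)
      (fun z _ => Finset.mem_range.2 (by have := hdCle z; omega))
    rw [hsph (x + r)] at hfib
    rw [Finset.sum_range_succ, Finset.sum_range_succ, Finset.sum_range_succ,
      Finset.sum_range_one, Finset.filter_filter, Finset.filter_filter, Finset.filter_filter,
      Finset.filter_filter] at hfib
    have h0 : (univ.filter fun z => hammingDist (x + r) z = 1 ∧ dC z = 0).card = 1 :=
      hc1f (x + r) h1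
    have h2 : (univ.filter fun z => hammingDist (x + r) z = 1 ∧ dC z = 2).card = N - q :=
      hb1f (x + r) h1
    have h3 : (univ.filter fun z => hammingDist (x + r) z = 1 ∧ dC z = 3).card = 0 := by
      rw [Finset.card_eq_zero, Finset.filter_eq_empty_iff]
      rintro z - ⟨hd, hz3⟩
      have := hc3' z hz3 (x + r) (by rw [hammingDist_comm]; exact hd)
      omega
    rw [h0, h2, h3] at hfib
    omega
  have hV2 : ∀ (x r : Fin n → F), dC (x + r) = 2 →
      (univ.filter fun y => hammingDist x y = 1 ∧ dC (y + r) = 1).card = q := by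
    intro x r h2
    rw [htransl x r 1]
    exact hc2f (x + r) h2
  -- ## the four dB-neighbour counts
  have hT1card : ∀ x, x ∉ FF →
      (univ.filter fun y => hammingDist x y = 1 ∧ dB y = 1).card
        = ∑ r ∈ R, (univ.filter fun y => hammingDist x y = 1 ∧ dC (y + r) = 1).card := by
    intro x hxF
    have hT1eq : (univ.filter fun y => hammingDist x y = 1 ∧ dB y = 1)
        = R.biUnion (fun r => univ.filter fun y => hammingDist x y = 1 ∧ dC (y + r) = 1) := by
      ext y
      simp only [mem_filter, mem_biUnion, mem_univ, true_and]
      constructor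
      · rintro ⟨hd, hdb⟩
        rcases hcase y with ⟨_, h0⟩ | ⟨_, _, h3⟩ | ⟨hyF, _, r, hrR, hr1⟩ | ⟨_, h2, _⟩
        · omega
        · omega
        · exact ⟨r, hrR, hd, hr1⟩
        · omega
      · rintro ⟨r, hrR, hd, hr1⟩
        refine ⟨hd, ?_⟩
        have hyF : y ∉ FF := by
          intro hyF
          have h03 := (hFFmem _).1 (add_mem hyF (hBF (hRmem r hrR)))
          omega
        exact hdB1 y hyF r (hRmem r hrR) hr1
    rw [hT1eq]
    exact Finset.card_biUnion (fun r hr r' hr' hne => by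
      rw [Function.onFun, Finset.disjoint_left]
      rintro y hy hy'
      have h1 := (mem_filter.1 hy).2.2
      have h1' := (mem_filter.1 hy').2.2
      exact hne (hRuniq y r r' hr hr' h1 h1'))
  have hT0card1 : ∀ x r₀ : Fin n → F, x ∉ FF → r₀ ∈ R → dC (x + r₀) = 1 →
      (univ.filter fun y => hammingDist x y = 1 ∧ dB y = 0).card = 1 := by
    intro x r₀ hxF hr₀R h1
    obtain ⟨c₀, hc₀, hw⟩ := hdCattain (x + r₀)
    rw [h1] at hw
    have hy₀B : r₀ + c₀ ∈ B := add_mem (hRmem r₀ hr₀R) (hCB hc₀)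
    have hdxy₀ : hammingDist x (r₀ + c₀) = 1 := by
      rw [hdist_norm, ← add_assoc]
      exact hw
    rw [Finset.card_eq_one]
    refine ⟨r₀ + c₀, ?_⟩
    rw [Finset.eq_singleton_iff_unique_mem]
    constructor
    · exact mem_filter.2 ⟨mem_univ _, hdxy₀, (hdB0 _).2 hy₀B⟩
    · intro y hy
      obtain ⟨-, hd, hdb⟩ := mem_filter.1 hy
      have hyB : y ∈ B := (hdB0 y).1 hdb
      have hyy₀ : hammingNorm (y + (r₀ + c₀)) ≤ 2 := by
        have htri := hammingDist_triangle y x (r₀ + c₀)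
        rw [hammingDist_comm y x] at htri
        calc hammingNorm (y + (r₀ + c₀)) = hammingDist y (r₀ + c₀) := (hdist_norm _ _).symm
          _ ≤ hammingDist x y + hammingDist x (r₀ + c₀) := htri
          _ ≤ 2 := by rw [hd, hdxy₀]
      have hmemB : y + (r₀ + c₀) ∈ B := add_mem hyB hy₀B
      have hdCle2 : dC (y + (r₀ + c₀)) ≤ 2 := le_trans (hdCnorm _) hyy₀
      have h0 : dC (y + (r₀ + c₀)) = 0 := by
        rcases hBFF _ hmemB with h|h
        · exact h
        · omega
      have hyC : y + (r₀ + c₀) ∈ C := (hdC0 _).1 h0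
      have hzero := hsmall (y + (r₀ + c₀)) hyC hyy₀
      have hfin : y = r₀ + c₀ := by
        have h' : (y + (r₀ + c₀)) + (r₀ + c₀) = 0 + (r₀ + c₀) := by rw [hzero]
        rwa [haddadd, zero_add] at h'
      exact hfin
  have hT0card2 : ∀ x : Fin n → F, x ∉ FF → (∀ b, b ∈ B → dC (x + b) ≠ 1) →
      (univ.filter fun y => hammingDist x y = 1 ∧ dB y = 0).card = 0 := by
    intro x hxF hno
    rw [Finset.card_eq_zero, Finset.filter_eq_empty_iff]
    rintro y - ⟨hd, hdb⟩
    have hyB : y ∈ B := (hdB0 y).1 hdb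
    have hd1 : dC (x + y) ≤ 1 := by
      have hwt : hammingNorm (x + y) = 1 := by rw [← hdist_norm]; exact hd
      have := hdCnorm (x + y)
      omega
    have hne0 : dC (x + y) ≠ 0 := by
      intro h0
      apply hxF
      have hxB : x ∈ B := by
        have hxe : x = (x + y) + y := (haddadd x y).symm
        rw [hxe]
        exact add_mem (hCB ((hdC0 _).1 h0)) hyB
      exact hBF hxB
    exact hno y hyB (by omega)
  have hT3card1 : ∀ x r₀ : Fin n → F, x ∉ FF → r₀ ∈ R → dC (x + r₀) = 1 →
      (univ.filter fun y => hammingDist x y = 1 ∧ dB y = 3).card = 0 := by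
    intro x r₀ hxF hr₀R h1
    rw [Finset.card_eq_zero, Finset.filter_eq_empty_iff]
    rintro y - ⟨hd, hdb⟩
    rcases hcase y with ⟨_, h0⟩ | ⟨hyF, hyB, _⟩ | ⟨_, h1', _⟩ | ⟨_, h2, _⟩
    · omega
    · have hyr₀F : y + r₀ ∈ FF := add_mem hyF (hBF (hRmem r₀ hr₀R))
      have hne3 : dC (y + r₀) ≠ 3 := by
        intro h3
        have hdd : hammingDist (y + r₀) (x + r₀) = 1 := by
          rw [Stmt18.hammingDist_add_right, hammingDist_comm]
          exact hd
        have := hc3' (y + r₀) h3 (x + r₀) hdd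
        omega
      have h0 : dC (y + r₀) = 0 := by
        rcases (hFFmem _).1 hyr₀F with h|h
        · exact h
        · exact absurd h hne3
      apply hyB
      have hye : y = (y + r₀) + r₀ := (haddadd y r₀).symm
      rw [hye]
      exact add_mem (hCB ((hdC0 _).1 h0)) (hRmem r₀ hr₀R)
    · omega
    · omega
  have hnotB_of_sphere : ∀ x y : Fin n → F, x ∉ FF → (∀ b, b ∈ B → dC (x + b) ≠ 1) →
      hammingDist x y = 1 → y ∉ B := by
    intro x y hxF hno hd hyB
    have hd1 : dC (x + y) ≤ 1 := by
      have hwt : hammingNorm (x + y) = 1 := by rw [← hdist_norm]; exact hd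
      have := hdCnorm (x + y)
      omega
    have hne0 : dC (x + y) ≠ 0 := by
      intro h0
      apply hxF
      have hxB : x ∈ B := by
        have hxe : x = (x + y) + y := (haddadd x y).symm
        rw [hxe]
        exact add_mem (hCB ((hdC0 _).1 h0)) hyB
      exact hBF hxB
    exact hno y hyB (by omega)
  have hT3card2 : ∀ x : Fin n → F, x ∉ FF → (∀ b, b ∈ B → dC (x + b) ≠ 1) → dC x = 2 →
      (univ.filter fun y => hammingDist x y = 1 ∧ dB y = 3).card = 1 := by
    intro x hxF hno hx2
    have heq : (univ.filter fun y => hammingDist x y = 1 ∧ dB y = 3)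
        = (univ.filter fun y => hammingDist x y = 1 ∧ dC y = 3) := by
      ext y
      simp only [mem_filter, mem_univ, true_and]
      constructor
      · rintro ⟨hd, hdb⟩
        refine ⟨hd, ?_⟩
        rcases hcase y with ⟨_, h0⟩ | ⟨hyF, hyB, _⟩ | ⟨_, h1', _⟩ | ⟨_, h2, _⟩
        · omega
        · exact hBC3 y hyF hyB
        · omega
        · omega
      · rintro ⟨hd, h3⟩
        refine ⟨hd, ?_⟩
        have hyF : y ∈ FF := (hFFmem y).2 (Or.inr h3)
        have hyB : y ∉ B := hnotB_of_sphere x y hxF hno hd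
        exact hdB3 y hyF hyB
    rw [heq]
    exact hb2f x hx2
  have hdBfib : ∀ x : Fin n → F,
      N - 1 = (univ.filter fun y => hammingDist x y = 1 ∧ dB y = 0).card
        + (univ.filter fun y => hammingDist x y = 1 ∧ dB y = 1).card
        + (univ.filter fun y => hammingDist x y = 1 ∧ dB y = 2).card
        + (univ.filter fun y => hammingDist x y = 1 ∧ dB y = 3).card := by
    intro x
    have hfib := Finset.card_eq_sum_card_fiberwise
      (f := dB) (s := univ.filter fun y => hammingDist x y = 1) (t := Finset.range 4)
      (fun z _ => Finset.mem_range.2 (by have := hdBle3 z; omega))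
    rw [hsph x] at hfib
    rw [Finset.sum_range_succ, Finset.sum_range_succ, Finset.sum_range_succ,
      Finset.sum_range_one, Finset.filter_filter, Finset.filter_filter, Finset.filter_filter,
      Finset.filter_filter] at hfib
    exact hfib
  have hT1card1 : ∀ x r₀ : Fin n → F, x ∉ FF → r₀ ∈ R → dC (x + r₀) = 1 →
      (univ.filter fun y => hammingDist x y = 1 ∧ dB y = 1).card = k * q - 2 := by
    intro x r₀ hxF hr₀R h1
    rw [hT1card x hxF]
    rw [← Finset.add_sum_erase _ _ hr₀R]
    have hrest : ∀ r ∈ R.erase r₀,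
        (univ.filter fun y => hammingDist x y = 1 ∧ dC (y + r) = 1).card = q := by
      intro r hr
      obtain ⟨hne, hrR⟩ := Finset.mem_erase.1 hr
      rcases hdC12 _ (hxrF x r hxF (hBF (hRmem r hrR))) with ha | hb
      · exact absurd (hRuniq x r r₀ hrR hr₀R ha h1) hne
      · exact hV2 x r hb
    rw [Finset.sum_congr rfl hrest, Finset.sum_const, smul_eq_mul,
      Finset.card_erase_of_mem hr₀R, hRcard, hV1 x r₀ h1]
    obtain ⟨k', rfl⟩ : ∃ k', k = k' + 1 := ⟨k - 1, by omega⟩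
    have hkq : (k' + 1) * q = k' * q + q := by ring
    have hkq' : (k' + 1 - 1) * q = k' * q := by simp
    rw [hkq, hkq']
    omega
  have hT1card2 : ∀ x : Fin n → F, x ∉ FF → (∀ b, b ∈ B → dC (x + b) ≠ 1) →
      (univ.filter fun y => hammingDist x y = 1 ∧ dB y = 1).card = k * q := by
    intro x hxF hno
    rw [hT1card x hxF]
    have hrest : ∀ r ∈ R,
        (univ.filter fun y => hammingDist x y = 1 ∧ dC (y + r) = 1).card = q := by
      intro r hr
      rcases hdC12 _ (hxrF x r hxF (hBF (hRmem r hr))) with ha | hb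
      · exact absurd ha (hno r (hRmem r hr))
      · exact hV2 x r hb
    rw [Finset.sum_congr rfl hrest, Finset.sum_const, smul_eq_mul, hRcard]
  have hT2card1 : ∀ x r₀ : Fin n → F, x ∉ FF → r₀ ∈ R → dC (x + r₀) = 1 →
      (univ.filter fun y => hammingDist x y = 1 ∧ dB y = 2).card = N - k * q := by
    intro x r₀ hxF hr₀R h1
    have hfib := hdBfib x
    rw [hT0card1 x r₀ hxF hr₀R h1, hT1card1 x r₀ hxF hr₀R h1,
      hT3card1 x r₀ hxF hr₀R h1] at hfib
    obtain ⟨K, hK⟩ : ∃ K, K = k * q := ⟨_, rfl⟩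
    rw [← hK] at hfib ⊢
    rw [← hK] at hkqN hkq2
    omega
  -- ## a word at distance 3 from B
  have hBltF : (B : Set (Fin n → F)).ncard < (FF : Set (Fin n → F)).ncard := by
    rw [hBcard, hFFcard]
    have hku : k < u := by omega
    calc k * cC < u * cC := mul_lt_mul_of_pos_right hku hcCpos
      _ = cC * u := mul_comm u cC
  obtain ⟨g, hgF, hgB⟩ : ∃ g, g ∈ FF ∧ g ∉ B := by
    by_contra h
    push_neg at h
    exact absurd (Set.ncard_le_ncard (fun z hz => h z hz) (Set.toFinite _)) (not_le.2 hBltF)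
  have hg3 : dB g = 3 := hdB3 g hgF hgB
  -- ## assemble
  refine ⟨B, R, hRcard, hRpair, hBun, fun x => hdBle3 x, ⟨g, hg3⟩, ?_⟩
  intro i hi x hx
  rw [← hdBdef] at hx
  rcases hcase x with ⟨hxB, h0⟩ | ⟨hxF, hxB, h3⟩ | ⟨hxF, h1, r₀, hr₀R, hr₀⟩ | ⟨hxF, h2, hno⟩
  · -- distance 0
    have hi0 : i = 0 := by omega
    subst hi0
    constructor
    · intro _
      have hall1 : ∀ y, hammingDist x y = 1 → dB y = 1 := by
        intro y hd
        have hyF : y ∉ FF := by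
          intro hyF
          have h03 := (hFFmem y).1 hyF
          rcases hBFF x hxB with hx0 | hx3
          · have := hb0' x hx0 y hd
            omega
          · have := hc3' x hx3 y hd
            omega
        have hyx1 : dC (y + x) = 1 :=
          hwt1 (y + x) (by rw [← hdist_norm, hammingDist_comm]; exact hd)
        exact hdB1 y hyF x hxB hyx1
      have hseteq : (univ.filter fun y => hammingDist x y = 1 ∧ dB y = 1)
          = univ.filter fun y => hammingDist x y = 1 := by
        ext y
        simp only [mem_filter, mem_univ, true_and]
        exact ⟨fun h => h.1, fun h => ⟨h, hall1 y h⟩⟩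
      have hcard1 : (univ.filter fun y => hammingDist x y = 1 ∧ dB y = 1).card = N - 1 := by
        rw [hseteq, hsph x]
      have hnc := hconv x (fun y => dB y = 1)
      rw [hcard1] at hnc
      simpa [← hdBdef] using hnc
    · intro hcon
      exact absurd hcon (by norm_num)
  · -- distance 3
    have hi3 : i = 3 := by omega
    subst hi3
    have hx3 : dC x = 3 := hBC3 x hxF hxB
    constructor
    · intro hcon
      exact absurd hcon (by norm_num)
    · intro _
      have hall2 : ∀ y, hammingDist x y = 1 → dB y = 2 := by
        intro y hd
        have hyF : y ∉ FF := by
          intro hyF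
          have h03 := (hFFmem y).1 hyF
          have := hc3' x hx3 y hd
          omega
        refine hdB2 y hyF ?_
        intro b hb h1'
        have hxbB : x + b ∉ C := by
          intro hc
          apply hxB
          have hxe : x = (x + b) + b := (haddadd x b).symm
          rw [hxe]
          exact add_mem (hCB hc) hb
        have hxbF : x + b ∈ FF := add_mem hxF (hBF hb)
        have hxb3 : dC (x + b) = 3 := by
          rcases (hFFmem _).1 hxbF with h|h
          · exact absurd ((hdC0 _).1 h) hxbB
          · exact h
        have hdd : hammingDist (x + b) (y + b) = 1 := by
          rw [Stmt18.hammingDist_add_right]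
          exact hd
        have := hc3' (x + b) hxb3 (y + b) hdd
        omega
      have hseteq : (univ.filter fun y => hammingDist x y = 1 ∧ dB y = 2)
          = univ.filter fun y => hammingDist x y = 1 := by
        ext y
        simp only [mem_filter, mem_univ, true_and]
        exact ⟨fun h => h.1, fun h => ⟨h, hall2 y h⟩⟩
      have hcard2 : (univ.filter fun y => hammingDist x y = 1 ∧ dB y = 2).card = N - 1 := by
        rw [hseteq, hsph x]
      have hnc := hconv x (fun y => dB y = 2)
      rw [hcard2] at hnc
      simpa [← hdBdef] using hnc
  · -- distance 1
    have hi1 : i = 1 := by omega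
    subst hi1
    constructor
    · intro _
      have hnc := hconv x (fun y => dB y = 2)
      rw [hT2card1 x r₀ hxF hr₀R hr₀] at hnc
      simpa [← hdBdef] using hnc
    · intro _
      have hnc := hconv x (fun y => dB y = 0)
      rw [hT0card1 x r₀ hxF hr₀R hr₀] at hnc
      simpa [← hdBdef] using hnc
  · -- distance 2
    have hi2 : i = 2 := by omega
    subst hi2
    have hx2 : dC x = 2 := by
      rcases hdC12 x hxF with ha | hb
      · have hz := hno 0 (zero_mem B)
        rw [add_zero] at hz
        exact absurd ha hz
      · exact hb
    constructor
    · intro _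
      have hnc := hconv x (fun y => dB y = 3)
      rw [hT3card2 x hxF hno hx2] at hnc
      simpa [← hdBdef] using hnc
    · intro _
      have hnc := hconv x (fun y => dB y = 1)
      rw [hT1card2 x hxF hno] at hnc
      simpa [← hdBdef] using hnc
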